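/- For all real matrices A, B and real (column) vectors x of arbitrary finite dimensions, (A ∘ B) ⊙ x = A ⊙ (B ⊙ x), where ∘ is the second semi-tensor product of matrices and ⊙ is the MV-2 product of a matrix with a vector. -/

import Mathlib

open Matrix

/-- `x ⊗ 1_k`: the Kronecker product of `x ∈ ℝ^m` with the all-ones vector `1_k ∈ ℝ^k`,
repeating each entry of `x` exactly `k` times. -/
noncomputable def vkron {m : ℕ} (x : Fin m → ℝ) (k : ℕ) : Fin (m * k) → ℝ :=
  fun j => x ⟨(j : ℕ) / k, Nat.div_lt_of_lt_mul (Nat.mul_comm m k ▸ j.isLt)⟩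

/-- `A ⊗ J_k` where `J_k = (1/k)·(all-ones k×k matrix)`. -/
noncomputable def mkronJ {m n : ℕ} (A : Matrix (Fin m) (Fin n) ℝ) (k : ℕ) :
    Matrix (Fin (m * k)) (Fin (n * k)) ℝ :=
  fun i j => A ⟨(i : ℕ) / k, Nat.div_lt_of_lt_mul (Nat.mul_comm m k ▸ i.isLt)⟩
               ⟨(j : ℕ) / k, Nat.div_lt_of_lt_mul (Nat.mul_comm n k ▸ j.isLt)⟩ / k

/-- `J_k`, the `k×k` matrix with all entries `1/k`. -/
noncomputable def Jmat (k : ℕ) : Matrix (Fin k) (Fin k) ℝ := fun _ _ => 1 / k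

/-- The all-ones column vector `1_k` as a `k×1` matrix. -/
def onesColM (k : ℕ) : Matrix (Fin k) (Fin 1) ℝ := fun _ _ => 1

/-- The transpose `1_kᵀ` of the all-ones vector, a `1×k` matrix. -/
def onesRowM (k : ℕ) : Matrix (Fin 1) (Fin k) ℝ := fun _ _ => 1

/-- Kronecker product realized on `Fin (a*c)` / `Fin (b*d)` indices. -/
noncomputable def kron {a b c d : ℕ} (A : Matrix (Fin a) (Fin b) ℝ)
    (B : Matrix (Fin c) (Fin d) ℝ) : Matrix (Fin (a * c)) (Fin (b * d)) ℝ :=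
  Matrix.reindex finProdFinEquiv finProdFinEquiv (Matrix.kroneckerMap (· * ·) A B)

private theorem lcm_eq_left (n p : ℕ) : n * (Nat.lcm n p / n) = Nat.lcm n p :=
  Nat.mul_div_cancel' (Nat.dvd_lcm_left n p)

private theorem lcm_eq_right (n p : ℕ) : p * (Nat.lcm n p / p) = Nat.lcm n p :=
  Nat.mul_div_cancel' (Nat.dvd_lcm_right n p)

private theorem lcm_mid (n p : ℕ) :
    n * (Nat.lcm n p / n) = p * (Nat.lcm n p / p) := by
  rw [lcm_eq_left, lcm_eq_right]

/-- The second semi-tensor product `A ∘ B := (A ⊗ J_{t/n})(B ⊗ J_{t/p})`, `t = lcm(n,p)`. -/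
noncomputable def smul2 {m n p q : ℕ} (A : Matrix (Fin m) (Fin n) ℝ)
    (B : Matrix (Fin p) (Fin q) ℝ) :
    Matrix (Fin (m * (Nat.lcm n p / n))) (Fin (q * (Nat.lcm n p / p))) ℝ :=
  mkronJ A (Nat.lcm n p / n) *
    (mkronJ B (Nat.lcm n p / p)).submatrix (Fin.cast (lcm_mid n p)) id

/-- The MV-2 product `A ⊙ x := (A ⊗ J_{t/n})(x ⊗ 1_{t/r})`, `t = lcm(n,r)`. -/
noncomputable def mv2 {m n r : ℕ} (A : Matrix (Fin m) (Fin n) ℝ) (x : Fin r → ℝ) :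
    Fin (m * (Nat.lcm n r / n)) → ℝ :=
  (mkronJ A (Nat.lcm n r / n)).mulVec
    (fun j => vkron x (Nat.lcm n r / r) (Fin.cast (lcm_mid n r) j))

/-- V-addition `x ⊞ y := x ⊗ 1_{t/m} + y ⊗ 1_{t/n} ∈ ℝ^t`, `t = lcm(m,n)`. -/
noncomputable def vadd' {m n : ℕ} (x : Fin m → ℝ) (y : Fin n → ℝ) :
    Fin (Nat.lcm m n) → ℝ :=
  fun j => vkron x (Nat.lcm m n / m) (Fin.cast (lcm_eq_left m n).symm j) +
           vkron y (Nat.lcm m n / n) (Fin.cast (lcm_eq_right m n).symm j)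

/-- V-subtraction `x ⊟ y := x ⊗ 1_{t/m} − y ⊗ 1_{t/n} ∈ ℝ^t`, `t = lcm(m,n)`. -/
noncomputable def vsub' {m n : ℕ} (x : Fin m → ℝ) (y : Fin n → ℝ) :
    Fin (Nat.lcm m n) → ℝ :=
  fun j => vkron x (Nat.lcm m n / m) (Fin.cast (lcm_eq_left m n).symm j) -
           vkron y (Nat.lcm m n / n) (Fin.cast (lcm_eq_right m n).symm j)

/-- Dimension-free norm `‖z‖_V = (1/√r)·‖z‖` for `z ∈ ℝ^r`. -/
noncomputable def vnorm {r : ℕ} (z : Fin r → ℝ) : ℝ :=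
  Real.sqrt ((∑ i, z i ^ 2) / r)

/-- Dimension-free inner product `⟨u,v⟩_V = (1/t)·⟨u ⊗ 1_{t/a}, v ⊗ 1_{t/b}⟩`. -/
noncomputable def vinner {a b : ℕ} (u : Fin a → ℝ) (v : Fin b → ℝ) : ℝ :=
  (∑ j : Fin (Nat.lcm a b),
      vkron u (Nat.lcm a b / a) (Fin.cast (lcm_eq_left a b).symm j) *
      vkron v (Nat.lcm a b / b) (Fin.cast (lcm_eq_right a b).symm j)) / (Nat.lcm a b)

private theorem lcm_mid' (m n : ℕ) :
    n * (Nat.lcm m n / n) = m * (Nat.lcm m n / m) := by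
  rw [lcm_eq_right, lcm_eq_left]

/-- `Π^m_n := (1/β)(I_n ⊗ 1_βᵀ)(I_m ⊗ 1_α)`, `t = lcm(m,n)`, `α = t/m`, `β = t/n`. -/
noncomputable def PiMat (m n : ℕ) : Matrix (Fin n) (Fin m) ℝ :=
  ((Nat.lcm m n / n : ℕ) : ℝ)⁻¹ •
    ((kron (1 : Matrix (Fin n) (Fin n) ℝ) (onesRowM (Nat.lcm m n / n))).submatrix
        (Fin.cast (Nat.mul_one n).symm) id *
      (kron (1 : Matrix (Fin m) (Fin m) ℝ) (onesColM (Nat.lcm m n / m))).submatrix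
        (Fin.cast (lcm_mid' m n)) (Fin.cast (Nat.mul_one m).symm))

/-- Spectral (operator) norm of a matrix w.r.t. Euclidean norms. -/
noncomputable def specNorm {m n : ℕ} (A : Matrix (Fin m) (Fin n) ℝ) : ℝ :=
  ‖LinearMap.toContinuousLinearMap (Matrix.toEuclideanLin A)‖

/-! ### Auxiliary machinery for `stmt_6` -/

private def padM {m n : ℕ} (A : Matrix (Fin m) (Fin n) ℝ) : ℕ → ℕ → ℝ :=
  fun i j => if h : i < m ∧ j < n then A ⟨i, h.1⟩ ⟨j, h.2⟩ else 0

private def padV {r : ℕ} (x : Fin r → ℝ) : ℕ → ℝ :=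
  fun j => if h : j < r then x ⟨j, h⟩ else 0

private lemma padM_eq {m n : ℕ} (A : Matrix (Fin m) (Fin n) ℝ) {i j : ℕ}
    (hi : i < m) (hj : j < n) : padM A i j = A ⟨i, hi⟩ ⟨j, hj⟩ := dif_pos ⟨hi, hj⟩

private lemma padV_eq {r : ℕ} (x : Fin r → ℝ) {j : ℕ} (hj : j < r) :
    padV x j = x ⟨j, hj⟩ := dif_pos hj

private lemma sum_refine (f : ℕ → ℝ) (s t : ℕ) :
    ∑ j ∈ Finset.range (s * t), f (j / s) = s * ∑ k ∈ Finset.range t, f k := by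
  rcases Nat.eq_zero_or_pos s with hs | hs
  · simp [hs]
  induction t with
  | zero => simp
  | succ t ih =>
    have h1 : s * (t + 1) = s * t + s := by ring
    rw [h1, Finset.range_eq_Ico,
      ← Finset.sum_Ico_consecutive (fun j => f (j / s)) (Nat.zero_le (s * t))
        (Nat.le_add_right (s * t) s),
      ← Finset.range_eq_Ico, ih, Finset.sum_Ico_eq_sum_range]
    have h2 : ∀ k ∈ Finset.range (s * t + s - s * t), f ((s * t + k) / s) = f t := by
      intro k hk
      simp only [Finset.mem_range] at hk
      rw [Nat.mul_add_div hs t k, Nat.div_eq_of_lt (by omega), Nat.add_zero]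
    rw [Finset.sum_congr rfl h2, Finset.sum_const, Finset.card_range]
    have h3 : s * t + s - s * t = s := by omega
    rw [h3, Finset.sum_range_succ, nsmul_eq_mul]
    ring

private lemma mv2_apply {m n r : ℕ} (A : Matrix (Fin m) (Fin n) ℝ) (x : Fin r → ℝ)
    (i : Fin (m * (Nat.lcm n r / n))) :
    mv2 A x i = (∑ j ∈ Finset.range (Nat.lcm n r),
        padM A ((i : ℕ) / (Nat.lcm n r / n)) (j / (Nat.lcm n r / n)) *
        padV x (j / (Nat.lcm n r / r))) / ((Nat.lcm n r / n : ℕ) : ℝ) := by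
  have hc : n * (Nat.lcm n r / n) = Nat.lcm n r := lcm_eq_left n r
  have step : ∀ j : Fin (n * (Nat.lcm n r / n)),
      mkronJ A (Nat.lcm n r / n) i j *
        vkron x (Nat.lcm n r / r) (Fin.cast (lcm_mid n r) j) =
      (fun jn : ℕ => padM A ((i : ℕ) / (Nat.lcm n r / n)) (jn / (Nat.lcm n r / n)) *
        padV x (jn / (Nat.lcm n r / r)) / ((Nat.lcm n r / n : ℕ) : ℝ)) (j : ℕ) := by
    intro j
    have h1 : (i : ℕ) / (Nat.lcm n r / n) < m :=
      Nat.div_lt_of_lt_mul (Nat.mul_comm m (Nat.lcm n r / n) ▸ i.isLt)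
    have h2 : (j : ℕ) / (Nat.lcm n r / n) < n :=
      Nat.div_lt_of_lt_mul (Nat.mul_comm n (Nat.lcm n r / n) ▸ j.isLt)
    have hj' : (j : ℕ) < r * (Nat.lcm n r / r) := lcm_mid n r ▸ j.isLt
    have h3 : (j : ℕ) / (Nat.lcm n r / r) < r :=
      Nat.div_lt_of_lt_mul (Nat.mul_comm r (Nat.lcm n r / r) ▸ hj')
    simp only [mkronJ, vkron, Fin.coe_cast, padM_eq A h1 h2, padV_eq x h3]
    ring
  rw [mv2, Matrix.mulVec, dotProduct, Finset.sum_congr rfl (fun j _ => step j),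
    Fin.sum_univ_eq_sum_range (fun jn : ℕ =>
      padM A ((i : ℕ) / (Nat.lcm n r / n)) (jn / (Nat.lcm n r / n)) *
        padV x (jn / (Nat.lcm n r / r)) / ((Nat.lcm n r / n : ℕ) : ℝ)) (n * (Nat.lcm n r / n)),
    hc, ← Finset.sum_div]

private lemma smul2_apply {m n p q : ℕ} (A : Matrix (Fin m) (Fin n) ℝ)
    (B : Matrix (Fin p) (Fin q) ℝ) {i j : ℕ}
    (hi : i < m * (Nat.lcm n p / n)) (hj : j < q * (Nat.lcm n p / p)) :
    padM (smul2 A B) i j =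
      (∑ k ∈ Finset.range (Nat.lcm n p),
        padM A (i / (Nat.lcm n p / n)) (k / (Nat.lcm n p / n)) *
        padM B (k / (Nat.lcm n p / p)) (j / (Nat.lcm n p / p))) /
      (((Nat.lcm n p / n : ℕ) : ℝ) * ((Nat.lcm n p / p : ℕ) : ℝ)) := by
  have hc : n * (Nat.lcm n p / n) = Nat.lcm n p := lcm_eq_left n p
  have step : ∀ k : Fin (n * (Nat.lcm n p / n)),
      mkronJ A (Nat.lcm n p / n) ⟨i, hi⟩ k *
        (mkronJ B (Nat.lcm n p / p)).submatrix (Fin.cast (lcm_mid n p)) id k ⟨j, hj⟩ =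
      (fun kn : ℕ => padM A (i / (Nat.lcm n p / n)) (kn / (Nat.lcm n p / n)) *
        padM B (kn / (Nat.lcm n p / p)) (j / (Nat.lcm n p / p)) /
        (((Nat.lcm n p / n : ℕ) : ℝ) * ((Nat.lcm n p / p : ℕ) : ℝ))) (k : ℕ) := by
    intro k
    have h1 : i / (Nat.lcm n p / n) < m :=
      Nat.div_lt_of_lt_mul (Nat.mul_comm m (Nat.lcm n p / n) ▸ hi)
    have h2 : (k : ℕ) / (Nat.lcm n p / n) < n :=
      Nat.div_lt_of_lt_mul (Nat.mul_comm n (Nat.lcm n p / n) ▸ k.isLt)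
    have hk' : (k : ℕ) < p * (Nat.lcm n p / p) := lcm_mid n p ▸ k.isLt
    have h3 : (k : ℕ) / (Nat.lcm n p / p) < p :=
      Nat.div_lt_of_lt_mul (Nat.mul_comm p (Nat.lcm n p / p) ▸ hk')
    have h4 : j / (Nat.lcm n p / p) < q :=
      Nat.div_lt_of_lt_mul (Nat.mul_comm q (Nat.lcm n p / p) ▸ hj)
    simp only [mkronJ, Matrix.submatrix_apply, Fin.coe_cast, id_eq,
      padM_eq A h1 h2, padM_eq B h3 h4]
    ring
  rw [padM_eq _ hi hj, smul2, Matrix.mul_apply,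
    Finset.sum_congr rfl (fun k _ => step k),
    Fin.sum_univ_eq_sum_range (fun kn : ℕ =>
      padM A (i / (Nat.lcm n p / n)) (kn / (Nat.lcm n p / n)) *
        padM B (kn / (Nat.lcm n p / p)) (j / (Nat.lcm n p / p)) /
        (((Nat.lcm n p / n : ℕ) : ℝ) * ((Nat.lcm n p / p : ℕ) : ℝ))) (n * (Nat.lcm n p / n)),
    hc, ← Finset.sum_div]

private lemma key_lcm' (n p q r t1 L0 L1 β u s : ℕ)
    (et1 : Nat.lcm n p = t1) (eL0 : Nat.lcm q r = L0) (eL1 : Nat.lcm (q * β) r = L1)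
    (e2 : p * β = t1) (e5 : q * u = L0) (e3 : q * β * s = L1)
    (hqβ : 0 < q * β) :
    Nat.lcm n (p * u) = t1 * s := by
  refine Nat.eq_of_mul_eq_mul_right hqβ ?_
  have h9 : q * Nat.lcm (n * β) t1 = q * β * t1 := by
    rw [← e2, Nat.lcm_mul_right, et1, e2]; ring
  calc Nat.lcm n (p * u) * (q * β)
      = Nat.lcm (n * (q * β)) (p * u * (q * β)) := (Nat.lcm_mul_right _ _ _).symm
    _ = Nat.lcm (q * (n * β)) (Nat.lcm q r * t1) := by
        rw [eL0]; congr 1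
        · ring
        · rw [← e5, ← e2]; ring
    _ = Nat.lcm (q * (n * β)) (Nat.lcm (q * t1) (r * t1)) := by rw [Nat.lcm_mul_right]
    _ = Nat.lcm (Nat.lcm (q * (n * β)) (q * t1)) (r * t1) := (Nat.lcm_assoc _ _ _).symm
    _ = Nat.lcm (q * Nat.lcm (n * β) t1) (r * t1) := by rw [Nat.lcm_mul_left]
    _ = Nat.lcm (q * β * t1) (r * t1) := by rw [h9]
    _ = Nat.lcm (q * β) r * t1 := Nat.lcm_mul_right _ _ _
    _ = t1 * s * (q * β) := by rw [eL1, ← e3]; ring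

private lemma core (fA : ℕ → ℝ) (b : ℕ → ℕ → ℝ) (ξ : ℕ → ℝ)
    (t1 L0 L1 α β s u v v' lam : ℕ)
    (hα : 0 < α) (hβ : 0 < β) (hs : 0 < s) (hu : 0 < u) (hlam : 0 < lam)
    (d3 : lam * u = β * s) (d4 : lam * v = v')
    (hL1 : L1 = lam * L0) :
    (∑ j ∈ Finset.range L1,
        ((∑ k ∈ Finset.range t1, fA (k / α) * b (k / β) (j / s / β)) /
          (((α : ℕ) : ℝ) * ((β : ℕ) : ℝ))) * ξ (j / v')) / ((s : ℕ) : ℝ)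
      = (∑ j ∈ Finset.range (t1 * s),
          fA (j / s / α) *
            ((∑ j' ∈ Finset.range L0, b (j / s / β) (j' / u) * ξ (j' / v)) / ((u : ℕ) : ℝ))) /
        (((α : ℕ) : ℝ) * ((s : ℕ) : ℝ)) := by
  have hα' : ((α : ℕ) : ℝ) ≠ 0 := Nat.cast_ne_zero.mpr hα.ne'
  have hβ' : ((β : ℕ) : ℝ) ≠ 0 := Nat.cast_ne_zero.mpr hβ.ne'
  have hs' : ((s : ℕ) : ℝ) ≠ 0 := Nat.cast_ne_zero.mpr hs.ne'
  have hu' : ((u : ℕ) : ℝ) ≠ 0 := Nat.cast_ne_zero.mpr hu.ne'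
  have hlam' : ((lam : ℕ) : ℝ) ≠ 0 := Nat.cast_ne_zero.mpr hlam.ne'
  have hd3 : ((lam : ℕ) : ℝ) * ((u : ℕ) : ℝ) = ((β : ℕ) : ℝ) * ((s : ℕ) : ℝ) := by
    exact_mod_cast congrArg (Nat.cast : ℕ → ℝ) d3
  -- RHS refinement
  have hR : (∑ j ∈ Finset.range (t1 * s),
        fA (j / s / α) *
          ((∑ j' ∈ Finset.range L0, b (j / s / β) (j' / u) * ξ (j' / v)) / ((u : ℕ) : ℝ)))
      = ((s : ℕ) : ℝ) * ∑ k ∈ Finset.range t1,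
          fA (k / α) *
            ((∑ j' ∈ Finset.range L0, b (k / β) (j' / u) * ξ (j' / v)) / ((u : ℕ) : ℝ)) := by
    rw [Nat.mul_comm t1 s]
    exact sum_refine (fun k => fA (k / α) *
      ((∑ j' ∈ Finset.range L0, b (k / β) (j' / u) * ξ (j' / v)) / ((u : ℕ) : ℝ))) s t1
  -- LHS: push ξ inside, swap sums
  have step1 : ∀ j ∈ Finset.range L1,
      ((∑ k ∈ Finset.range t1, fA (k / α) * b (k / β) (j / s / β)) /
        (((α : ℕ) : ℝ) * ((β : ℕ) : ℝ))) * ξ (j / v')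
      = (∑ k ∈ Finset.range t1, fA (k / α) * b (k / β) (j / s / β) * ξ (j / v')) /
        (((α : ℕ) : ℝ) * ((β : ℕ) : ℝ)) := by
    intro j _
    rw [div_mul_eq_mul_div, Finset.sum_mul]
  have hdiv1 : ∀ j : ℕ, j / s / β = j / lam / u := by
    intro j
    rw [Nat.div_div_eq_div_mul, Nat.div_div_eq_div_mul, Nat.mul_comm s β, ← d3]
  have hdiv2 : ∀ j : ℕ, j / v' = j / lam / v := by
    intro j
    rw [← d4, Nat.div_div_eq_div_mul]
  have hInner : ∀ k : ℕ,
      (∑ j ∈ Finset.range L1, fA (k / α) * b (k / β) (j / s / β) * ξ (j / v'))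
      = ((lam : ℕ) : ℝ) * ∑ j' ∈ Finset.range L0,
          fA (k / α) * b (k / β) (j' / u) * ξ (j' / v) := by
    intro k
    have : ∀ j ∈ Finset.range L1,
        fA (k / α) * b (k / β) (j / s / β) * ξ (j / v') =
        (fun j' : ℕ => fA (k / α) * b (k / β) (j' / u) * ξ (j' / v)) (j / lam) := by
      intro j _
      simp only [hdiv1 j, hdiv2 j]
    rw [Finset.sum_congr rfl this, hL1]
    exact sum_refine (fun j' => fA (k / α) * b (k / β) (j' / u) * ξ (j' / v)) lam L0
  rw [Finset.sum_congr rfl step1, ← Finset.sum_div, Finset.sum_comm,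
    Finset.sum_congr rfl (fun k _ => hInner k), hR, ← Finset.mul_sum]
  -- now a pure scalar identity in the common sums
  have hsum : ∀ k ∈ Finset.range t1,
      fA (k / α) * ((∑ j' ∈ Finset.range L0, b (k / β) (j' / u) * ξ (j' / v)) / ((u : ℕ) : ℝ))
      = (∑ j' ∈ Finset.range L0, fA (k / α) * b (k / β) (j' / u) * ξ (j' / v)) / ((u : ℕ) : ℝ) := by
    intro k _
    rw [mul_div_assoc', Finset.mul_sum]
    congr 1
    exact Finset.sum_congr rfl (fun j' _ => by ring)
  rw [Finset.sum_congr rfl hsum, ← Finset.sum_div]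
  set G : ℝ := ∑ k ∈ Finset.range t1, ∑ j' ∈ Finset.range L0,
      fA (k / α) * b (k / β) (j' / u) * ξ (j' / v) with hG
  field_simp
  linear_combination G * hd3
/-- (A ∘ B) ⊙ x = A ⊙ (B ⊙ x). -/
theorem stmt_6 {m n p q r : ℕ} (hm : 0 < m) (hn : 0 < n) (hp : 0 < p)
    (hq : 0 < q) (hr : 0 < r)
    (A : Matrix (Fin m) (Fin n) ℝ) (B : Matrix (Fin p) (Fin q) ℝ) (x : Fin r → ℝ) :
    HEq (mv2 (smul2 A B) x) (mv2 A (mv2 B x)) := by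
  set t1 := Nat.lcm n p with ht1
  set α := t1 / n with hαdef
  set β := t1 / p with hβdef
  set L0 := Nat.lcm q r with hL0def
  set u := L0 / q with hudef
  set v := L0 / r with hvdef
  set L1 := Nat.lcm (q * β) r with hL1def
  set s := L1 / (q * β) with hsdef
  set v' := L1 / r with hv'def
  set t2 := Nat.lcm n (p * u) with ht2
  set w := t2 / n with hwdef
  set c := t2 / (p * u) with hcdef
  -- basic multiplicative equations
  have e1 : n * α = t1 := lcm_eq_left n p
  have e2 : p * β = t1 := lcm_eq_right n p
  have e5 : q * u = L0 := lcm_eq_left q r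
  have e6 : r * v = L0 := lcm_eq_right q r
  have e3 : q * β * s = L1 := lcm_eq_left (q * β) r
  have e4 : r * v' = L1 := lcm_eq_right (q * β) r
  have e7 : n * w = t2 := lcm_eq_left n (p * u)
  have e8 : p * u * c = t2 := lcm_eq_right n (p * u)
  -- positivity
  have hpt1 : 0 < t1 := Nat.lcm_pos hn hp
  have hpL0 : 0 < L0 := Nat.lcm_pos hq hr
  have hα : 0 < α := Nat.pos_of_ne_zero (fun h => by rw [h, Nat.mul_zero] at e1; omega)
  have hβ : 0 < β := Nat.pos_of_ne_zero (fun h => by rw [h, Nat.mul_zero] at e2; omega)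
  have hqβ : 0 < q * β := Nat.mul_pos hq hβ
  have hpL1 : 0 < L1 := Nat.lcm_pos hqβ hr
  have hu : 0 < u := Nat.pos_of_ne_zero (fun h => by rw [h, Nat.mul_zero] at e5; omega)
  have hv : 0 < v := Nat.pos_of_ne_zero (fun h => by rw [h, Nat.mul_zero] at e6; omega)
  have hs : 0 < s := Nat.pos_of_ne_zero (fun h => by rw [h, Nat.mul_zero] at e3; omega)
  -- lam, with L1 = lam * L0
  have hdvd : L0 ∣ L1 := by
    rw [hL0def, hL1def]
    exact Nat.lcm_dvd ((dvd_mul_right q β).trans (Nat.dvd_lcm_left _ _)) (Nat.dvd_lcm_right _ _)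
  obtain ⟨lam, hlam⟩ := hdvd
  have hL1' : L1 = lam * L0 := by rw [hlam, Nat.mul_comm]
  have hlampos : 0 < lam := Nat.pos_of_ne_zero (fun h => by rw [h, Nat.zero_mul] at hL1'; omega)
  -- key lcm identity and derived equations
  have key : t2 = t1 * s :=
    key_lcm' n p q r t1 L0 L1 β u s ht1.symm hL0def.symm hL1def.symm e2 e5 e3 hqβ
  have d1 : w = α * s := by
    refine Nat.eq_of_mul_eq_mul_left hn ?_
    rw [e7, key, ← e1]; ring
  have d3 : lam * u = β * s := by
    refine Nat.eq_of_mul_eq_mul_left hq ?_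
    calc q * (lam * u) = q * u * lam := by ring
      _ = L0 * lam := by rw [e5]
      _ = L1 := hlam.symm
      _ = q * β * s := e3.symm
      _ = q * (β * s) := by ring
  have d4 : lam * v = v' := by
    refine Nat.eq_of_mul_eq_mul_left hr ?_
    calc r * (lam * v) = r * v * lam := by ring
      _ = L0 * lam := by rw [e6]
      _ = L1 := hlam.symm
      _ = r * v' := e4.symm
  have hcu : c * u = s * β := by
    have h : p * (u * c) = p * (β * s) := by
      calc p * (u * c) = p * u * c := by ring
        _ = t2 := e8
        _ = t1 * s := key
        _ = p * β * s := by rw [e2]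
        _ = p * (β * s) := by ring
    have h2 := Nat.eq_of_mul_eq_mul_left hp h
    rw [Nat.mul_comm c u, h2, Nat.mul_comm β s]
  -- dimension equality
  have D : m * α * s = m * w := by rw [d1]; ring
  rw [Fin.heq_fun_iff D]
  intro i
  have hival : ((⟨(i : ℕ), D ▸ i.isLt⟩ : Fin (m * w)) : ℕ) = (i : ℕ) := rfl
  rw [mv2_apply (smul2 A B) x, mv2_apply A (mv2 B x)]
  simp only [← ht1, ← hαdef, ← hβdef, ← hL0def, ← hudef, ← hvdef, ← hL1def, ← hsdef,
    ← hv'def, ← ht2, ← hwdef, ← hcdef, Fin.val_mk]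
  -- expand the smul2 entries on the left
  have hbi : (i : ℕ) / s < m * α := Nat.div_lt_of_lt_mul (Nat.mul_comm (m * α) s ▸ i.isLt)
  have hsm : ∀ j ∈ Finset.range L1,
      padM (smul2 A B) ((i : ℕ) / s) (j / s) * padV x (j / v')
      = ((∑ k ∈ Finset.range t1,
            padM A ((i : ℕ) / s / α) (k / α) * padM B (k / β) (j / s / β)) /
          (((α : ℕ) : ℝ) * ((β : ℕ) : ℝ))) * padV x (j / v') := by
    intro j hj
    simp only [Finset.mem_range] at hj
    have hbj : j / s < q * β := by
      refine Nat.div_lt_of_lt_mul ?_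
      rw [Nat.mul_comm s (q * β), e3]; exact hj
    rw [smul2_apply A B hbi hbj]
  rw [Finset.sum_congr rfl hsm]
  -- expand the inner mv2 entries on the right
  have hy : ∀ j ∈ Finset.range t2,
      padM A ((i : ℕ) / w) (j / w) * padV (mv2 B x) (j / c)
      = padM A ((i : ℕ) / w) (j / w) *
        ((∑ j' ∈ Finset.range L0,
            padM B (j / c / u) (j' / u) * padV x (j' / v)) / ((u : ℕ) : ℝ)) := by
    intro j hj
    simp only [Finset.mem_range] at hj
    have hjc : j / c < p * u := by
      refine Nat.div_lt_of_lt_mul ?_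
      rw [Nat.mul_comm c (p * u), e8]; exact hj
    rw [padV_eq (mv2 B x) hjc, mv2_apply B x ⟨j / c, hjc⟩]
  rw [Finset.sum_congr rfl hy]
  -- align the division indices on the right
  have hjw : ∀ j : ℕ, j / w = j / s / α := by
    intro j
    rw [d1, Nat.div_div_eq_div_mul, Nat.mul_comm s α]
  have hjcu : ∀ j : ℕ, j / c / u = j / s / β := by
    intro j
    rw [Nat.div_div_eq_div_mul, Nat.div_div_eq_div_mul, hcu]
  simp only [hjw, hjcu]
  rw [key, d1, Nat.cast_mul]
  exact core (padM A ((i : ℕ) / s / α)) (padM B) (padV x) t1 L0 L1 α β s u v v' lam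
    hα hβ hs hu hlampos d3 d4 hL1'
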